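/- arXiv:2401.10470 — 4 statements merged into one kernel-verified Lean document; each statement's English description precedes it below -/
import Mathlib

section
/- Let q ≥ 2 be an integer and let m be a positive integer. Let g be the (m+1)×(m+1) real matrix defined in the context. Then g² = q^m · I_{m+1}, where I_{m+1} is the identity matrix of size m+1. In particular, when m is even, (q^{-m/2}·g)² = I_{m+1}. -/
open Finset

def psiAux (x : ℝ) (a t : ℕ) : ℝ := if t < a then (x-1)*x^t else if t = a then -x^t else 0
def chiAux (x : ℝ) (b t : ℕ) : ℝ := if t < b then x-1 else if t = b then -1 else 0

def gEnt (x : ℝ) (m s t : ℕ) : ℝ :=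
  if t = 0 then 1
  else if s + t ≤ m then x ^ (t - 1) * (x - 1)
  else if s + t = m + 1 then -x ^ (t - 1)
  else 0

lemma truncAux {f : ℕ → ℝ} {c m : ℕ} (h : c ≤ m) (h0 : ∀ t, c ≤ t → f t = 0) :
    ∑ t ∈ range m, f t = ∑ t ∈ range c, f t := by
  refine (Finset.sum_subset (Finset.range_subset_range.mpr h) ?_).symm
  intro t _ ht
  exact h0 t (le_of_not_gt (fun hc => ht (mem_range.mpr hc)))

lemma geomAux (x : ℝ) (k : ℕ) : (x-1) * ∑ t ∈ range k, x^t = x^k - 1 := by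
  rw [mul_comm, geom_sum_mul]

lemma psiAux_self (x : ℝ) (a : ℕ) : psiAux x a a = -x^a := by simp [psiAux]
lemma chiAux_self (x : ℝ) (b : ℕ) : chiAux x b b = -1 := by simp [chiAux]
lemma chiAux_of_lt (x : ℝ) {b t : ℕ} (h : t < b) : chiAux x b t = x - 1 := by simp [chiAux, h]
lemma psiAux_of_lt (x : ℝ) {a t : ℕ} (h : t < a) : psiAux x a t = (x-1)*x^t := by
  simp [psiAux, h]

lemma sum_psiAux_lt (x : ℝ) {a m : ℕ} (h : a < m) :
    ∑ t ∈ range m, psiAux x a t = -1 := by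
  rw [truncAux (c := a+1) h (fun t ht => by
    simp only [psiAux]
    rw [if_neg (by omega), if_neg (by omega)])]
  rw [Finset.sum_range_succ,
    Finset.sum_congr rfl (fun t ht => psiAux_of_lt x (mem_range.mp ht)),
    psiAux_self, ← Finset.mul_sum, geomAux]
  ring

lemma sum_psiAux_full (x : ℝ) (m : ℕ) :
    ∑ t ∈ range m, psiAux x m t = x^m - 1 := by
  rw [Finset.sum_congr rfl (fun t ht => psiAux_of_lt x (mem_range.mp ht)),
    ← Finset.mul_sum, geomAux]

lemma sum_pc_eq (x : ℝ) {a m : ℕ} (h : a < m) :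
    ∑ t ∈ range m, psiAux x a t * chiAux x a t = x^(a+1) - x + 1 := by
  rw [truncAux (c := a+1) h (fun t ht => by
    simp only [psiAux]
    rw [if_neg (by omega), if_neg (by omega), zero_mul])]
  rw [Finset.sum_range_succ,
    Finset.sum_congr rfl (fun t ht => show psiAux x a t * chiAux x a t = (x-1)*((x-1)*x^t) by
      have h' := mem_range.mp ht
      rw [psiAux_of_lt x h', chiAux_of_lt x h']; ring),
    psiAux_self, chiAux_self, ← Finset.mul_sum, ← Finset.mul_sum, geomAux]
  ring

lemma sum_pc_lt (x : ℝ) {a b m : ℕ} (hab : a < b) (ham : a < m) :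
    ∑ t ∈ range m, psiAux x a t * chiAux x b t = -(x-1) := by
  rw [truncAux (c := a+1) ham (fun t ht => by
    simp only [psiAux]
    rw [if_neg (by omega), if_neg (by omega), zero_mul])]
  rw [Finset.sum_range_succ,
    Finset.sum_congr rfl (fun t ht => show psiAux x a t * chiAux x b t = (x-1)*((x-1)*x^t) by
      have h' := mem_range.mp ht
      rw [psiAux_of_lt x h', chiAux_of_lt x (lt_trans h' hab)]; ring),
    psiAux_self, chiAux_of_lt x hab, ← Finset.mul_sum, ← Finset.mul_sum, geomAux]
  ring

lemma sum_pc_gt (x : ℝ) {a b m : ℕ} (hba : b < a) (hbm : b < m) :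
    ∑ t ∈ range m, psiAux x a t * chiAux x b t = -(x-1) := by
  rw [truncAux (c := b+1) hbm (fun t ht => by
    simp only [chiAux]
    rw [if_neg (by omega), if_neg (by omega), mul_zero])]
  rw [Finset.sum_range_succ,
    Finset.sum_congr rfl (fun t ht => show psiAux x a t * chiAux x b t = (x-1)*((x-1)*x^t) by
      have h' := mem_range.mp ht
      rw [psiAux_of_lt x (lt_trans h' hba), chiAux_of_lt x h']; ring),
    psiAux_of_lt x hba, chiAux_self, ← Finset.mul_sum, ← Finset.mul_sum, geomAux]
  ring

lemma gEnt_succ (x : ℝ) (m s u t : ℕ) (hs : s ≤ m) (hu : u ≤ m) :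
    gEnt x m s (t+1) * gEnt x m (t+1) u =
      psiAux x (m-s) t * (if u = 0 then 1 else x ^ (u-1) * chiAux x (m-u) t) := by
  simp only [gEnt, psiAux, chiAux, Nat.add_sub_cancel, Nat.succ_ne_zero, if_false]
  split_ifs <;> first | ring1 | (exfalso; omega)

lemma gEnt_zero (x : ℝ) (m s u : ℕ) (hu : u ≤ m) :
    gEnt x m s 0 * gEnt x m 0 u = if u = 0 then 1 else x ^ (u-1) * (x-1) := by
  by_cases h : u = 0 <;> simp [gEnt, h, hu]

lemma gEnt_sum (x : ℝ) (m s u : ℕ) (hm : 0 < m) (hs : s ≤ m) (hu : u ≤ m) :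
    ∑ t ∈ range (m+1), gEnt x m s t * gEnt x m t u = x ^ m * (if s = u then 1 else 0) := by
  rw [Finset.sum_range_succ']
  by_cases hu0 : u = 0
  · have hsucc : ∀ t, gEnt x m s (t+1) * gEnt x m (t+1) u = psiAux x (m-s) t := by
      intro t; rw [gEnt_succ x m s u t hs hu, if_pos hu0, mul_one]
    have hzero : gEnt x m s 0 * gEnt x m 0 u = 1 := by
      rw [gEnt_zero x m s u hu, if_pos hu0]
    rw [Finset.sum_congr rfl (fun t _ => hsucc t), hzero]
    by_cases hs0 : s = 0
    · rw [if_pos (show s = u by omega), hs0, Nat.sub_zero, sum_psiAux_full]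
      ring
    · rw [if_neg (show ¬ s = u by omega), sum_psiAux_lt x (show m - s < m by omega)]
      ring
  · have hsucc : ∀ t, gEnt x m s (t+1) * gEnt x m (t+1) u
        = x ^ (u-1) * (psiAux x (m-s) t * chiAux x (m-u) t) := by
      intro t; rw [gEnt_succ x m s u t hs hu, if_neg hu0]; ring
    have hzero : gEnt x m s 0 * gEnt x m 0 u = x ^ (u-1) * (x-1) := by
      rw [gEnt_zero x m s u hu, if_neg hu0]
    rw [Finset.sum_congr rfl (fun t _ => hsucc t), hzero, ← Finset.mul_sum]
    have hbm : m - u < m := by omega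
    rcases lt_trichotomy s u with h | h | h
    · rw [if_neg (show ¬ s = u by omega),
        sum_pc_gt x (show m - u < m - s by omega) hbm]
      ring
    · rw [if_pos h, h, sum_pc_eq x hbm]
      have h2 : x ^ (u - 1) * (x ^ (m - u + 1) - x + 1) + x ^ (u-1) * (x - 1)
          = x ^ (u - 1) * x ^ (m - u + 1) := by ring
      rw [h2, ← pow_add, (show u - 1 + (m - u + 1) = m by omega)]
      ring
    · rw [if_neg (show ¬ s = u by omega),
        sum_pc_lt x (show m - s < m - u by omega) (show m - s < m by omega)]
      ring

/-- The (m+1)×(m+1) real matrix `g` from the MacWilliams identity for NRT codes: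
`g s t = 1` if `t = 0`; `q^(t-1)(q-1)` if `0 < t ≤ m - s`; `-q^(t-1)` if `t + s = m + 1`;
and `0` if `t + s > m + 1`. -/
def gMat (q m : ℕ) : Matrix (Fin (m + 1)) (Fin (m + 1)) ℝ := fun s t =>
  if t.val = 0 then 1
  else if s.val + t.val ≤ m then (q : ℝ) ^ (t.val - 1) * ((q : ℝ) - 1)
  else if s.val + t.val = m + 1 then -(q : ℝ) ^ (t.val - 1)
  else 0

/-- `g² = q^m · I`, and in particular, when `m` is even, `(q^{-m/2} • g)² = I`. -/
theorem gMat_sq (q m : ℕ) (hq : 2 ≤ q) (hm : 0 < m) :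
    gMat q m * gMat q m = (q : ℝ) ^ m • (1 : Matrix (Fin (m + 1)) (Fin (m + 1)) ℝ) ∧
    (Even m →
      (((q : ℝ) ^ (m / 2))⁻¹ • gMat q m) * (((q : ℝ) ^ (m / 2))⁻¹ • gMat q m) = 1) := by
  have hmain : gMat q m * gMat q m = (q : ℝ) ^ m • (1 : Matrix (Fin (m + 1)) (Fin (m + 1)) ℝ) := by
    ext s u
    rw [Matrix.mul_apply, Matrix.smul_apply, Matrix.one_apply, smul_eq_mul]
    have h1 : ∀ t : Fin (m+1), gMat q m s t * gMat q m t u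
        = gEnt (q : ℝ) m s.val t.val * gEnt (q : ℝ) m t.val u.val := fun t => rfl
    rw [Finset.sum_congr rfl (fun t _ => h1 t),
      Fin.sum_univ_eq_sum_range (fun tn => gEnt (q : ℝ) m s.val tn * gEnt (q : ℝ) m tn u.val) (m+1),
      gEnt_sum (q : ℝ) m s.val u.val hm (Nat.lt_succ_iff.mp s.isLt) (Nat.lt_succ_iff.mp u.isLt)]
    congr 1
    by_cases h : s = u
    · rw [if_pos (Fin.val_eq_val s u |>.mpr h), if_pos h]
    · rw [if_neg (fun hv => h (Fin.ext hv)), if_neg h]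
  refine ⟨hmain, fun hev => ?_⟩
  have hq0 : (q : ℝ) ≠ 0 := by positivity
  obtain ⟨k, hk⟩ := hev
  have hk2 : m / 2 = k := by omega
  rw [smul_mul_assoc, Matrix.mul_smul, hmain, smul_smul, smul_smul, hk2]
  have h3 : ((q:ℝ) ^ k)⁻¹ * (((q:ℝ) ^ k)⁻¹ * (q:ℝ) ^ m) = 1 := by
    rw [hk, pow_add]
    field_simp
  rw [mul_assoc, h3, one_smul]
end

section
/- Let q be a prime power, let m be a positive even integer, let n be a positive integer, and let C be a self-dual NRT code in M_{n,m}(F_q). Let g be the (m+1)×(m+1) real matrix defined in the context and let H_C ∈ ℂ[x_0,x_1,…,x_m] be the shape enumerator of C. Then H_C(x) = H_C(q^{-m/2}·g·x), i.e., H_C is unchanged under the linear substitution of variables x_s ↦ Σ_{t=0}^{m} q^{-m/2} g_{st} x_t. -/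
open MvPolynomial

/-- The NRT weight of a row vector: `ρ(v) = max {j : v_j ≠ 0}` (1-indexed), `0` for `v = 0`. -/
def nrtRho {m : ℕ} {F : Type*} [Field F] [DecidableEq F] (v : Fin m → F) : ℕ :=
  (Finset.univ.filter fun j => v j ≠ 0).sup fun j => j.val + 1

/-- The NRT inner product `⟨A,B⟩ = Σ_i Σ_j a_{ij} b_{i,m-j+1}`. -/
def nrtInner {n m : ℕ} {F : Type*} [Field F] (A B : Matrix (Fin n) (Fin m) F) : F :=
  ∑ i, ∑ j, A i j * B i j.rev

/-- The dual code of an NRT code with respect to the NRT inner product. -/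
def dualCode {n m : ℕ} {F : Type*} [Field F]
    (C : Submodule F (Matrix (Fin n) (Fin m) F)) :
    Submodule F (Matrix (Fin n) (Fin m) F) where
  carrier := {A | ∀ B ∈ C, nrtInner A B = 0}
  add_mem' := by
    intro a b ha hb B hB
    simp only [nrtInner, Matrix.add_apply, add_mul, Finset.sum_add_distrib] at *
    rw [ha B hB, hb B hB, add_zero]
  zero_mem' := by
    intro B hB
    simp [nrtInner]
  smul_mem' := by
    intro c a ha B hB
    simp only [nrtInner, Matrix.smul_apply, smul_eq_mul, mul_assoc, ← Finset.mul_sum] at *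
    rw [ha B hB, mul_zero]

/-- The number of rows of `A` whose NRT weight is exactly `j` (for `j = 0,1,…,m`). -/
def shapeCount {n m : ℕ} {F : Type*} [Field F] [DecidableEq F]
    (A : Matrix (Fin n) (Fin m) F) (j : Fin (m + 1)) : ℕ :=
  (Finset.univ.filter fun i : Fin n => nrtRho (A i) = j.val).card

open Classical in
/-- The shape enumerator `H_C = Σ_{A ∈ C} x_0^{e_0(A)} x_1^{e_1(A)} ⋯ x_m^{e_m(A)}`. -/
noncomputable def shapeEnum {n m : ℕ} {F : Type*} [Field F] [Fintype F] [DecidableEq F]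
    (C : Submodule F (Matrix (Fin n) (Fin m) F)) : MvPolynomial (Fin (m + 1)) ℂ :=
  ∑ A : C, ∏ j : Fin (m + 1), X j ^ shapeCount (A : Matrix (Fin n) (Fin m) F) j

/-- Substitution of variables `x_s ↦ Σ_t A_{st} x_t` as an algebra endomorphism. -/
noncomputable def substAlg {ι : Type*} [Fintype ι] {k : Type*} [CommSemiring k]
    (A : Matrix ι ι k) : MvPolynomial ι k →ₐ[k] MvPolynomial ι k :=
  aeval fun s => ∑ t, A s t • X t

section NRTAux
set_option linter.unusedSectionVars false
set_option linter.unreachableTactic false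
set_option linter.unusedTactic false
set_option linter.unusedVariables false
set_option maxHeartbeats 1000000

variable {F : Type*} [Field F] [Fintype F] [DecidableEq F] {m : ℕ}

lemma nrtRho_le (v : Fin m → F) : nrtRho v ≤ m := by
  apply Finset.sup_le; intro j _; exact j.isLt

def rhoFin (v : Fin m → F) : Fin (m+1) := ⟨nrtRho v, Nat.lt_succ_of_le (nrtRho_le v)⟩

lemma nrtRho_le_iff {r : ℕ} (v : Fin m → F) :
    nrtRho v ≤ r ↔ ∀ j : Fin m, r ≤ j.val → v j = 0 := by
  rw [nrtRho, Finset.sup_le_iff]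
  constructor
  · intro h j hj; by_contra hv
    have := h j (Finset.mem_filter.mpr ⟨Finset.mem_univ _, hv⟩); omega
  · intro h j hj
    rw [Finset.mem_filter] at hj
    by_contra hc; push_neg at hc
    exact hj.2 (h j (by omega))

lemma nrtRho_eq_zero_iff (v : Fin m → F) : nrtRho v = 0 ↔ v = 0 := by
  rw [← Nat.le_zero, nrtRho_le_iff]
  constructor
  · intro h; funext j; exact h j (Nat.zero_le _)
  · intro h j _; rw [h]; rfl

lemma exists_rho (v : Fin m → F) (h : nrtRho v ≠ 0) :
    ∃ j : Fin m, v j ≠ 0 ∧ j.val + 1 = nrtRho v := by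
  have hne : (Finset.univ.filter fun j => v j ≠ 0).Nonempty := by
    by_contra hc
    rw [Finset.not_nonempty_iff_eq_empty] at hc
    rw [nrtRho, hc] at h; simp at h
  obtain ⟨j, hj, hs⟩ := Finset.exists_mem_eq_sup _ hne fun j : Fin m => j.val + 1
  exact ⟨j, (Finset.mem_filter.mp hj).2, hs.symm⟩

lemma nrtRho_eq_iff {r : ℕ} (v : Fin m → F) (hr0 : 0 < r) (hrm : r ≤ m) :
    nrtRho v = r ↔ (∀ j : Fin m, r ≤ j.val → v j = 0) ∧ v ⟨r-1, by omega⟩ ≠ 0 := by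
  constructor
  · rintro rfl
    refine ⟨(nrtRho_le_iff v).mp le_rfl, ?_⟩
    obtain ⟨j, hj, hjr⟩ := exists_rho v (by omega)
    have hjj : j = ⟨nrtRho v - 1, by omega⟩ := Fin.ext (by simp; omega)
    rwa [← hjj]
  · rintro ⟨h1, h2⟩
    have hle : nrtRho v ≤ r := (nrtRho_le_iff v).mpr h1
    have hge : (⟨r-1, by omega⟩ : Fin m).val + 1 ≤ nrtRho v :=
      Finset.le_sup (f := fun j : Fin m => j.val + 1)
        (Finset.mem_filter.mpr ⟨Finset.mem_univ _, h2⟩)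
    simp at hge; omega

lemma addChar_map_sum (ψ : AddChar F ℂ) {ι : Type*} (s : Finset ι) (f : ι → F) :
    ψ (∑ i ∈ s, f i) = ∏ i ∈ s, ψ (f i) := by
  classical
  induction s using Finset.induction with
  | empty => simp
  | insert _ _ h ih => rw [Finset.sum_insert h, Finset.prod_insert h, AddChar.map_add_eq_mul, ih]

lemma charSum_eq (ψ : AddChar F ℂ) (hψ : ψ.IsPrimitive) (w : Fin m → F) (r : Fin (m+1)) :
    ∑ v ∈ Finset.univ.filter (fun v : Fin m → F => nrtRho v = r.val),
      ψ (∑ j, v j * w j.rev)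
    = ((gMat (Fintype.card F) m (rhoFin w) r : ℝ) : ℂ) := by
  set q := Fintype.card F with hq
  have hrm : r.val ≤ m := Nat.lt_succ_iff.mp r.isLt
  rcases Nat.eq_zero_or_pos r.val with hr0 | hr0
  · -- r = 0 case
    have hfil : Finset.univ.filter (fun v : Fin m → F => nrtRho v = r.val) = {0} := by
      ext v; simp [hr0, nrtRho_eq_zero_iff]
    rw [hfil, Finset.sum_singleton]
    simp [gMat, hr0]
  · set r' := r.val - 1 with hr'
    have hrv : r.val = r' + 1 := by omega
    -- the coordinate-wise constraint sets
    set S : Fin m → Finset F := fun j =>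
      if j.val < r' then Finset.univ else if j.val = r' then Finset.univ \ {0} else {0} with hS
    have hfil : Finset.univ.filter (fun v : Fin m → F => nrtRho v = r.val) =
        Fintype.piFinset S := by
      ext v
      rw [Finset.mem_filter, Fintype.mem_piFinset]
      simp only [Finset.mem_univ, true_and]
      rw [nrtRho_eq_iff v hr0 hrm]
      constructor
      · rintro ⟨h1, h2⟩ j
        rcases lt_trichotomy j.val r' with h | h | h
        · simp [hS, h]
        · have : j = ⟨r.val - 1, by omega⟩ := Fin.ext (by simp [h, hr'])
          simp [hS, h, this, h2]
          rw [if_neg (show ¬ (r.val - 1 < r') by omega), if_pos (show r.val - 1 = r' by omega)]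
          simpa using h2
        · have := h1 j (by omega)
          simp [hS, Nat.lt_asymm h, Nat.ne_of_gt h, this]
      · intro h
        constructor
        · intro j hj
          have := h j
          simp [hS, show ¬ j.val < r' by omega, show ¬ j.val = r' by omega] at this
          exact this
        · have := h ⟨r.val - 1, by omega⟩
          simp [hS, show ¬ (r.val - 1 < r') by omega, show r.val - 1 = r' from rfl] at this
          exact this
    rw [hfil]
    have hsummand : ∀ v : Fin m → F, ψ (∑ j, v j * w j.rev) = ∏ j, ψ (v j * w j.rev) :=
      fun v => addChar_map_sum ψ _ _
    simp_rw [hsummand]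
    rw [← Finset.prod_univ_sum S (fun j x => ψ (x * w j.rev))]
    -- auxiliary function W
    set W : ℕ → F := fun k => if h : k < m then w (Fin.rev ⟨k, h⟩) else 0 with hW
    have hWj : ∀ j : Fin m, w j.rev = W j.val := by
      intro j; rw [hW]; simp only [j.isLt, dif_pos]
    set G : ℕ → ℂ := fun k => if k < r' then (if W k = 0 then (q:ℂ) else 0)
      else if k = r' then ((if W k = 0 then (q:ℂ) else 0) - 1)
      else 1 with hG
    have factor : ∀ j : Fin m, (∑ x ∈ S j, ψ (x * w j.rev)) = G j.val := by
      intro j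
      rw [hWj j, hG]
      by_cases h1 : j.val < r'
      · simp only [hS, if_pos h1]
        rw [AddChar.sum_mulShift _ hψ]
        simp [h1, hq]
      · by_cases h2 : j.val = r'
        · simp only [hS, if_neg h1, if_pos h2]
          rw [Finset.sum_sdiff_eq_sub (Finset.subset_univ _), AddChar.sum_mulShift _ hψ,
            Finset.sum_singleton]
          simp [h1, h2, hq]
        · simp only [hS, if_neg h1, if_neg h2]
          rw [Finset.sum_singleton]
          simp [h1, h2]
    rw [Finset.prod_congr rfl (fun j _ => factor j), Fin.prod_univ_eq_prod_range G m]
    -- now evaluate the product over range m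
    set s := nrtRho w with hs
    have hsm : s ≤ m := nrtRho_le w
    have hrhow : (rhoFin w : Fin (m+1)).val = s := rfl
    have hzero : ∀ t : Fin m, s ≤ t.val → w t = 0 := (nrtRho_le_iff w).mp le_rfl
    have hWval : ∀ k (h : k < m), W k = w ⟨m - (k+1), by omega⟩ := by
      intro k h
      simp only [hW]; rw [dif_pos h]
      congr 1 <;> exact Fin.ext (by simp [Fin.val_rev])
    have hGlt : ∀ k, k < r' → W k = 0 → G k = (q:ℂ) := by
      intro k hk hWk; rw [hG]; simp only [if_pos hk, if_pos hWk]
    have hGgt : ∀ k, r' < k → G k = 1 := by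
      intro k hk; rw [hG]; simp only [if_neg (by omega : ¬ k < r'), if_neg (by omega : ¬ k = r')]
    by_cases hcase1 : s + r.val ≤ m
    · have hWz : ∀ k, k ≤ r' → W k = 0 := by
        intro k hk
        rw [hWval k (by omega)]
        exact hzero _ (by simp; omega)
      have hout : ∀ k ∈ Finset.range m, k ∉ Finset.range (r'+1) → G k = 1 := by
        intro k _ hk; simp only [Finset.mem_range] at hk
        exact hGgt k (by omega)
      rw [← Finset.prod_subset (Finset.range_subset_range.mpr (by omega : r' + 1 ≤ m)) hout,
        Finset.prod_range_succ]
      rw [Finset.prod_congr rfl (fun k hk => hGlt k (Finset.mem_range.mp hk) (hWz k (by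
        have := Finset.mem_range.mp hk; omega)))]
      rw [Finset.prod_const, Finset.card_range]
      have hGr' : G r' = (q:ℂ) - 1 := by
        rw [hG]; simp [if_neg (by omega : ¬ r' < r'), hWz r' le_rfl]
      rw [hGr']
      simp only [gMat, hrhow, hrv, if_neg (by omega : ¬ r' + 1 = 0),
        if_pos (by omega : s + (r'+1) ≤ m)]
      push_cast
      try ring_nf
      try simp [hrv]
    · by_cases hcase2 : s + r.val = m + 1
      · have hs1 : 1 ≤ s := by omega
        have hWz : ∀ k, k < r' → W k = 0 := by
          intro k hk
          rw [hWval k (by omega)]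
          exact hzero _ (by simp; omega)
        obtain ⟨j, hjne, hjv⟩ := exists_rho w (by omega)
        have hWr' : W r' ≠ 0 := by
          rw [hWval r' (by omega)]
          have : (⟨m - (r'+1), by omega⟩ : Fin m) = j := Fin.ext (by simp; omega)
          rw [this]; exact hjne
        have hout : ∀ k ∈ Finset.range m, k ∉ Finset.range (r'+1) → G k = 1 := by
          intro k _ hk; simp only [Finset.mem_range] at hk
          exact hGgt k (by omega)
        rw [← Finset.prod_subset (Finset.range_subset_range.mpr (by omega : r' + 1 ≤ m)) hout,
          Finset.prod_range_succ]
        rw [Finset.prod_congr rfl (fun k hk => hGlt k (Finset.mem_range.mp hk)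
          (hWz k (Finset.mem_range.mp hk)))]
        rw [Finset.prod_const, Finset.card_range]
        have hGr' : G r' = -1 := by
          rw [hG]
          simp [if_neg (by omega : ¬ r' < r'), hWr']
        rw [hGr']
        simp only [gMat, hrhow, hrv, if_neg (by omega : ¬ r' + 1 = 0),
          if_neg (by omega : ¬ s + (r'+1) ≤ m), if_pos (by omega : s + (r'+1) = m + 1)]
        push_cast
        try ring
      · -- zero case
        have hs2 : 2 ≤ s := by omega
        obtain ⟨j, hjne, hjv⟩ := exists_rho w (by omega)
        have hk0m : m - s < m := by omega
        have hWk0 : W (m - s) ≠ 0 := by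
          rw [hWval _ hk0m]
          have : (⟨m - (m - s + 1), by omega⟩ : Fin m) = j := Fin.ext (by simp; omega)
          rw [this]; exact hjne
        have hGk0 : G (m - s) = 0 := by
          rw [hG]; simp only [if_pos (by omega : m - s < r'), if_neg hWk0]
        rw [Finset.prod_eq_zero (Finset.mem_range.mpr hk0m) hGk0]
        simp only [gMat, hrhow, hrv, if_neg (by omega : ¬ r' + 1 = 0),
          if_neg (by omega : ¬ s + (r'+1) ≤ m), if_neg (by omega : ¬ s + (r'+1) = m + 1)]
        simp

lemma shapeProd {n : ℕ} (A : Matrix (Fin n) (Fin m) F) :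
    ∏ j : Fin (m+1), (X j : MvPolynomial (Fin (m+1)) ℂ) ^ shapeCount A j
      = ∏ i : Fin n, X (rhoFin (A i)) := by
  rw [← Finset.prod_fiberwise Finset.univ (fun i => rhoFin (A i))
    (fun i => (X (rhoFin (A i)) : MvPolynomial (Fin (m+1)) ℂ))]
  apply Finset.prod_congr rfl
  intro j _
  rw [Finset.prod_congr rfl (fun i hi => by rw [(Finset.mem_filter.mp hi).2]),
    Finset.prod_const]
  congr 1
  unfold shapeCount
  congr 1
  ext i
  simp [Fin.ext_iff, rhoFin]

lemma vecSum (ψ : AddChar F ℂ) (hψ : ψ.IsPrimitive) (w : Fin m → F) :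
    ∑ v : Fin m → F, ψ (∑ j, v j * w j.rev) • (X (rhoFin v) : MvPolynomial (Fin (m+1)) ℂ)
    = ∑ t, ((gMat (Fintype.card F) m (rhoFin w) t : ℝ) : ℂ) • X t := by
  rw [← Finset.sum_fiberwise Finset.univ (fun v : Fin m → F => rhoFin v)
    (fun v => ψ (∑ j, v j * w j.rev) • (X (rhoFin v) : MvPolynomial (Fin (m+1)) ℂ))]
  apply Finset.sum_congr rfl
  intro t _
  have hft : Finset.univ.filter (fun v : Fin m → F => rhoFin v = t)
      = Finset.univ.filter (fun v : Fin m → F => nrtRho v = t.val) := by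
    ext v; simp [Fin.ext_iff, rhoFin]
  rw [Finset.sum_congr rfl (fun v hv => by rw [(Finset.mem_filter.mp hv).2]),
    ← Finset.sum_smul, hft, charSum_eq ψ hψ w t]

lemma matrixSum (ψ : AddChar F ℂ) (hψ : ψ.IsPrimitive) {n : ℕ}
    (B : Matrix (Fin n) (Fin m) F) :
    ∑ A : Matrix (Fin n) (Fin m) F,
      ψ (nrtInner A B) • ∏ i, (X (rhoFin (A i)) : MvPolynomial (Fin (m+1)) ℂ)
    = ∏ i, ∑ t, ((gMat (Fintype.card F) m (rhoFin (B i)) t : ℝ) : ℂ) • X t := by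
  have hsummand : ∀ A : Matrix (Fin n) (Fin m) F,
      ψ (nrtInner A B) • ∏ i, (X (rhoFin (A i)) : MvPolynomial (Fin (m+1)) ℂ)
      = ∏ i, ψ (∑ j, A i j * B i j.rev) • (X (rhoFin (A i)) : MvPolynomial (Fin (m+1)) ℂ) := by
    intro A
    calc ψ (nrtInner A B) • ∏ i, (X (rhoFin (A i)) : MvPolynomial (Fin (m+1)) ℂ)
        = C (ψ (nrtInner A B)) * ∏ i, X (rhoFin (A i)) := smul_eq_C_mul _ _
      _ = C (∏ i, ψ (∑ j, A i j * B i j.rev)) * ∏ i, X (rhoFin (A i)) := by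
          rw [nrtInner, addChar_map_sum]
      _ = (∏ i, C (ψ (∑ j, A i j * B i j.rev))) * ∏ i, X (rhoFin (A i)) := by
          rw [map_prod (C : ℂ →+* MvPolynomial (Fin (m+1)) ℂ)]
      _ = ∏ i, (C (ψ (∑ j, A i j * B i j.rev)) * X (rhoFin (A i))) :=
          (Finset.prod_mul_distrib).symm
      _ = ∏ i, ψ (∑ j, A i j * B i j.rev) • (X (rhoFin (A i)) : MvPolynomial (Fin (m+1)) ℂ) := by
          simp_rw [smul_eq_C_mul]
  simp_rw [hsummand]
  have hswap := Finset.prod_univ_sum (fun _ : Fin n => (Finset.univ : Finset (Fin m → F)))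
    (fun i v => ψ (∑ j, v j * B i j.rev) • (X (rhoFin v) : MvPolynomial (Fin (m+1)) ℂ))
  rw [Fintype.piFinset_univ] at hswap
  have hmat : ∑ A : Matrix (Fin n) (Fin m) F,
      ∏ i, ψ (∑ j, A i j * B i j.rev) • (X (rhoFin (A i)) : MvPolynomial (Fin (m+1)) ℂ)
      = ∑ x : ∀ _ : Fin n, Fin m → F,
      ∏ i, ψ (∑ j, x i j * B i j.rev) • (X (rhoFin (x i)) : MvPolynomial (Fin (m+1)) ℂ) :=
    Fintype.sum_equiv (Matrix.of).symm _ _ (fun A => rfl)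
  rw [hmat, ← hswap]
  exact Finset.prod_congr rfl fun i _ => vecSum ψ hψ (B i)

section Lin
variable {n : ℕ}

lemma nrtInner_comm (A B : Matrix (Fin n) (Fin m) F) : nrtInner A B = nrtInner B A := by
  unfold nrtInner
  apply Finset.sum_congr rfl
  intro i _
  exact Fintype.sum_equiv Fin.revPerm _ _ (fun j => by simp [Fin.rev_rev, mul_comm])

lemma nrtInner_add_right (A B B' : Matrix (Fin n) (Fin m) F) :
    nrtInner A (B + B') = nrtInner A B + nrtInner A B' := by
  simp [nrtInner, Matrix.add_apply, mul_add, Finset.sum_add_distrib]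

lemma nrtInner_smul_right (c : F) (A B : Matrix (Fin n) (Fin m) F) :
    nrtInner A (c • B) = c * nrtInner A B := by
  simp only [nrtInner, Matrix.smul_apply, smul_eq_mul, Finset.mul_sum]
  congr 1; ext i; congr 1; ext j; ring

/-- The NRT bilinear form. -/
noncomputable def nrtForm (n m : ℕ) (F : Type*) [Field F] [Fintype F] [DecidableEq F] :
    LinearMap.BilinForm F (Matrix (Fin n) (Fin m) F) :=
  LinearMap.mk₂ F nrtInner
    (fun A A' B => by
      simp [nrtInner, Matrix.add_apply, add_mul, Finset.sum_add_distrib])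
    (fun c A B => by
      simp only [nrtInner, Matrix.smul_apply, smul_eq_mul, Finset.mul_sum]
      congr 1; ext i; congr 1; ext j; ring)
    (fun A B B' => nrtInner_add_right A B B')
    (fun c A B => nrtInner_smul_right c A B)

lemma nrtForm_apply (A B : Matrix (Fin n) (Fin m) F) : nrtForm n m F A B = nrtInner A B := rfl

lemma nrtForm_refl : (nrtForm n m F).IsRefl := by
  intro A B h
  rwa [nrtForm_apply, nrtInner_comm, ← nrtForm_apply]

lemma nrtForm_nondeg : (nrtForm n m F).Nondegenerate := by
  refine (LinearMap.IsRefl.nondegenerate_iff_separatingLeft (fun A B h => nrtForm_refl A B h)).mpr ?_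
  intro A h
  ext i j
  by_contra hij
  have h0 := h (fun i' j' => if i' = i ∧ j' = j.rev then (1:F) else 0)
  change nrtInner A (fun i' j' => if i' = i ∧ j' = j.rev then (1:F) else 0) = 0 at h0
  unfold nrtInner at h0
  rw [Finset.sum_eq_single i] at h0
  · rw [Finset.sum_eq_single j] at h0
    · simp at h0
      exact hij (by simpa using h0)
    · intro b _ hb
      simp [Fin.rev_inj, hb]
    · simp
  · intro b _ hb
    simp [hb]
  · simp

lemma finrank_dualCode (C : Submodule F (Matrix (Fin n) (Fin m) F)) :
    Module.finrank F (dualCode C) = n * m - Module.finrank F C := by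
  have hortho : dualCode C = (nrtForm n m F).orthogonal C := by
    ext A
    constructor
    · intro hA B hB
      have : nrtInner A B = 0 := hA B hB
      rwa [nrtForm_apply, nrtInner_comm]
    · intro hA B hB
      have := hA B hB
      rwa [nrtForm_apply, nrtInner_comm] at this
  rw [hortho, LinearMap.BilinForm.finrank_orthogonal nrtForm_nondeg C]
  congr 1
  rw [Module.finrank_matrix]
  simp
end Lin

section Main
variable {n : ℕ}

lemma sum_char_eq_zero (ψ : AddChar F ℂ) (hψ : ψ.IsPrimitive)
    (C : Submodule F (Matrix (Fin n) (Fin m) F)) (A : Matrix (Fin n) (Fin m) F)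
    (hA : A ∉ dualCode C) [Fintype C] :
    ∑ B : C, ψ (nrtInner A (B : Matrix (Fin n) (Fin m) F)) = 0 := by
  have hex : ∃ B ∈ C, nrtInner A B ≠ 0 := by
    by_contra hc
    push_neg at hc
    exact hA hc
  obtain ⟨B₀, hB₀, hne⟩ := hex
  let φ : C →+ F := AddMonoidHom.mk' (fun B => nrtInner A (B : Matrix (Fin n) (Fin m) F))
    (by intro B B'; exact nrtInner_add_right A _ _)
  have hχ : ψ.compAddMonoidHom φ ≠ 1 := by
    rw [AddChar.ne_one_iff]
    have hm := hψ hne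
    rw [AddChar.ne_one_iff] at hm
    obtain ⟨x, hx⟩ := hm
    refine ⟨⟨x • B₀, C.smul_mem x hB₀⟩, ?_⟩
    rw [AddChar.compAddMonoidHom_apply]
    have : φ ⟨x • B₀, C.smul_mem x hB₀⟩ = x * nrtInner A B₀ := nrtInner_smul_right x A B₀
    rw [this]
    rwa [AddChar.mulShift_apply, mul_comm] at hx
  have := AddChar.sum_eq_zero_of_ne_one hχ
  simpa [AddChar.compAddMonoidHom_apply, φ] using this

lemma poisson (ψ : AddChar F ℂ) (hψ : ψ.IsPrimitive)
    (C : Submodule F (Matrix (Fin n) (Fin m) F)) :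
    (Nat.card C : ℂ) • shapeEnum (dualCode C)
      = substAlg ((gMat (Fintype.card F) m).map (fun x : ℝ => (x : ℂ))) (shapeEnum C) := by
  classical
  have hmono : ∀ (D : Submodule F (Matrix (Fin n) (Fin m) F)),
      shapeEnum D = ∑ A : D, ∏ i, (X (rhoFin ((A : Matrix (Fin n) (Fin m) F) i))
        : MvPolynomial (Fin (m+1)) ℂ) := by
    intro D
    rw [shapeEnum]
    exact Finset.sum_congr rfl fun A _ => shapeProd _
  set mono : Matrix (Fin n) (Fin m) F → MvPolynomial (Fin (m+1)) ℂ :=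
    fun A => ∏ i, X (rhoFin (A i)) with hmonodef
  -- the big double sum
  have key : ∑ A : Matrix (Fin n) (Fin m) F,
      (∑ B : C, ψ (nrtInner A (B : Matrix (Fin n) (Fin m) F))) • mono A
      = ∑ B : C, ∑ A : Matrix (Fin n) (Fin m) F,
        ψ (nrtInner A (B : Matrix (Fin n) (Fin m) F)) • mono A := by
    simp_rw [Finset.sum_smul]
    rw [Finset.sum_comm]
  -- evaluate inner sums
  have e1 : ∀ A : Matrix (Fin n) (Fin m) F,
      (∑ B : C, ψ (nrtInner A (B : Matrix (Fin n) (Fin m) F)))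
      = if A ∈ dualCode C then (Nat.card C : ℂ) else 0 := by
    intro A
    by_cases hA : A ∈ dualCode C
    · rw [if_pos hA]
      rw [Finset.sum_congr rfl (fun B _ => by rw [hA B B.2, AddChar.map_zero_eq_one])]
      simp [Nat.card_eq_fintype_card]
    · rw [if_neg hA]
      exact sum_char_eq_zero ψ hψ C A hA
  -- left side
  have left : ∑ A : Matrix (Fin n) (Fin m) F,
      (∑ B : C, ψ (nrtInner A (B : Matrix (Fin n) (Fin m) F))) • mono A
      = (Nat.card C : ℂ) • shapeEnum (dualCode C) := by
    rw [Finset.sum_congr rfl (fun A _ => by rw [e1 A])]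
    rw [hmono (dualCode C), Finset.smul_sum]
    rw [← Finset.sum_subtype (Finset.univ.filter (· ∈ dualCode C))
      (fun A => by simp) (fun A => (Nat.card C : ℂ) • mono A)]
    rw [Finset.sum_filter]
    apply Finset.sum_congr rfl
    intro A _
    by_cases hA : A ∈ dualCode C <;> simp [hA]
  -- right side
  have right : ∑ B : C, ∑ A : Matrix (Fin n) (Fin m) F,
      ψ (nrtInner A (B : Matrix (Fin n) (Fin m) F)) • mono A
      = substAlg ((gMat (Fintype.card F) m).map (fun x : ℝ => (x : ℂ))) (shapeEnum C) := by
    rw [hmono C, map_sum]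
    apply Finset.sum_congr rfl
    intro B _
    rw [matrixSum ψ hψ]
    rw [substAlg, map_prod]
    apply Finset.prod_congr rfl
    intro i _
    rw [aeval_X]
    apply Finset.sum_congr rfl
    intro t _
    rw [Matrix.map_apply]
  rw [← left, key, right]

end Main

section Final
variable {n : ℕ}

lemma substAlg_smul_mono (c : ℂ) (M : Matrix (Fin (m+1)) (Fin (m+1)) ℂ)
    (s : Fin n → Fin (m+1)) :
    substAlg (c • M) (∏ i, (X (s i) : MvPolynomial (Fin (m+1)) ℂ))
      = c ^ n • substAlg M (∏ i, (X (s i) : MvPolynomial (Fin (m+1)) ℂ)) := by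
  rw [substAlg, substAlg, map_prod, map_prod]
  simp_rw [aeval_X]
  have : ∀ i : Fin n, (∑ t, (c • M) (s i) t • (X t : MvPolynomial (Fin (m+1)) ℂ))
      = C c * ∑ t, M (s i) t • (X t : MvPolynomial (Fin (m+1)) ℂ) := by
    intro i
    rw [Finset.mul_sum]
    apply Finset.sum_congr rfl
    intro t _
    rw [Matrix.smul_apply, smul_eq_C_mul, smul_eq_C_mul, smul_eq_mul, map_mul]
    ring
  rw [Finset.prod_congr rfl (fun i _ => this i), Finset.prod_mul_distrib,
    Finset.prod_const, Finset.card_univ, Fintype.card_fin, smul_eq_C_mul, ← map_pow]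

lemma substAlg_smul_shapeEnum (c : ℂ) (M : Matrix (Fin (m+1)) (Fin (m+1)) ℂ)
    (C' : Submodule F (Matrix (Fin n) (Fin m) F)) :
    substAlg (c • M) (shapeEnum C') = c ^ n • substAlg M (shapeEnum C') := by
  classical
  rw [shapeEnum, map_sum, map_sum, Finset.smul_sum]
  apply Finset.sum_congr rfl
  intro A _
  rw [shapeProd, substAlg_smul_mono c M]

lemma card_selfdual (hme : Even m)
    (C : Submodule F (Matrix (Fin n) (Fin m) F)) (hC : C = dualCode C) :
    Nat.card C = Fintype.card F ^ (n * (m / 2)) := by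
  classical
  obtain ⟨k, hk⟩ := hme
  have hdual := finrank_dualCode C
  rw [← hC] at hdual
  have hle : Module.finrank F C ≤ n * m := by
    have h1 := Submodule.finrank_le C
    rwa [Module.finrank_matrix, Fintype.card_fin, Fintype.card_fin, Module.finrank_self, mul_one] at h1
  have hnm : n * m = n * k + n * k := by rw [hk]; ring
  have hfr : Module.finrank F C = n * k := by omega
  have hm2 : m / 2 = k := by omega
  rw [Nat.card_eq_fintype_card, Module.card_eq_pow_finrank (K := F) (V := C), hfr, hm2]

/-- Existence of a primitive additive character `F → ℂ`. -/
lemma exists_primitive_addChar :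
    ∃ ψ : AddChar F ℂ, ψ.IsPrimitive := by
  set p := ringChar F with hp
  haveI : Fact p.Prime := ⟨CharP.char_is_prime F p⟩
  haveI : NeZero p := ⟨Nat.Prime.ne_zero Fact.out⟩
  letI : Algebra (ZMod p) F := ZMod.algebra _ _
  let ψ : AddChar F ℂ :=
    (ZMod.stdAddChar (N := p)).compAddMonoidHom (Algebra.trace (ZMod p) F).toAddMonoidHom
  have hψ : ψ ≠ 1 := by
    obtain ⟨a, ha⟩ := FiniteField.trace_to_zmod_nondegenerate F (one_ne_zero (α := F))
    rw [one_mul] at ha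
    rw [AddChar.ne_one_iff]
    refine ⟨a, ?_⟩
    intro hfa
    apply ha
    have : ZMod.stdAddChar (Algebra.trace (ZMod p) F a) = ZMod.stdAddChar (0 : ZMod p) := by
      rw [AddChar.map_zero_eq_one]
      exact hfa
    exact ZMod.injective_stdAddChar this
  exact ⟨ψ, AddChar.IsPrimitive.of_ne_one hψ⟩


end Final
end NRTAux

set_option maxHeartbeats 1000000 in
/-- MacWilliams invariance for self-dual NRT codes: if `C = C^⊤` in `M_{n,m}(F_q)` with `m`
even, then the shape enumerator of `C` satisfies `H_C(x) = H_C(q^{-m/2}·g·x)`. -/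
theorem shapeEnum_selfDual_invariant {F : Type*} [Field F] [Fintype F] [DecidableEq F]
    (m n : ℕ) (hm : 0 < m) (hme : Even m) (hn : 0 < n)
    (C : Submodule F (Matrix (Fin n) (Fin m) F)) (hC : C = dualCode C) :
    shapeEnum C =
      substAlg (((((Fintype.card F : ℝ)) ^ (m / 2))⁻¹ • gMat (Fintype.card F) m).map
        (fun x : ℝ => (x : ℂ))) (shapeEnum C) := by
  classical
  obtain ⟨ψ, hψ⟩ := exists_primitive_addChar (F := F)
  set q := Fintype.card F with hq
  have hq0 : (q : ℂ) ≠ 0 := Nat.cast_ne_zero.mpr Fintype.card_ne_zero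
  set gC := (gMat q m).map (fun x : ℝ => (x : ℂ)) with hgC
  have hmap : ((((q : ℝ)) ^ (m / 2))⁻¹ • gMat q m).map (fun x : ℝ => (x : ℂ))
      = (((q : ℂ) ^ (m / 2))⁻¹) • gC := by
    ext s t
    simp only [Matrix.map_apply, Matrix.smul_apply, smul_eq_mul, hgC]
    push_cast
    ring
  rw [hmap, substAlg_smul_shapeEnum, ← poisson ψ hψ C, ← hC]
  rw [card_selfdual hme C hC, smul_smul]
  rw [show ((((q:ℂ) ^ (m / 2))⁻¹) ^ n * ((q ^ (n * (m / 2)) : ℕ) : ℂ)) = 1 by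
    push_cast
    rw [← inv_pow, ← pow_mul, mul_comm (m/2) n]
    field_simp
    rw [← mul_pow, one_div, inv_mul_cancel₀ hq0, one_pow]]
  rw [one_smul]
end

section
/- Let τ := diag(1,−1,1) and σ := (1/2)·[[1,1,2],[1,1,−2],[1,−1,0]], and let G be the subgroup of GL_3(ℚ) generated by τ and σ, acting on ℂ[x_0,x_1,x_2] by linear substitution of variables. Set f_1 := x_0 + x_2, f_2 := x_0² + x_1² + 2x_2², f_3 := x_0³ + 3x_0x_2² + 3x_1²x_2 + x_2³. Then the invariant ring ℂ[x_0,x_1,x_2]^G equals the ℂ-subalgebra generated by {f_1, f_2, f_3}. -/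
open MvPolynomial

/-- The matrix `τ = diag(1,−1,1)`. -/
def tauQ : Matrix (Fin 3) (Fin 3) ℚ := !![1, 0, 0; 0, -1, 0; 0, 0, 1]

/-- The matrix `σ = (1/2)·[[1,1,2],[1,1,−2],[1,−1,0]]`. -/
def sigmaQ : Matrix (Fin 3) (Fin 3) ℚ := (1 / 2 : ℚ) • !![1, 1, 2; 1, 1, -2; 1, -1, 0]

/-- The subgroup `G ≤ GL_3(ℚ)` generated by `τ` and `σ`. -/
def grpG : Subgroup (Matrix (Fin 3) (Fin 3) ℚ)ˣ :=
  Subgroup.closure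
    {u : (Matrix (Fin 3) (Fin 3) ℚ)ˣ |
      (u : Matrix (Fin 3) (Fin 3) ℚ) = tauQ ∨ (u : Matrix (Fin 3) (Fin 3) ℚ) = sigmaQ}

noncomputable def f1 : MvPolynomial (Fin 3) ℂ := X 0 + X 2
noncomputable def f2 : MvPolynomial (Fin 3) ℂ := X 0 ^ 2 + X 1 ^ 2 + 2 * X 2 ^ 2
noncomputable def f3 : MvPolynomial (Fin 3) ℂ :=
  X 0 ^ 3 + 3 * X 0 * X 2 ^ 2 + 3 * X 1 ^ 2 * X 2 + X 2 ^ 3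

/-! ### Auxiliary lemmas -/

lemma substAlg_X {ι : Type*} [Fintype ι] {k : Type*} [CommSemiring k]
    (A : Matrix ι ι k) (s : ι) : substAlg A (X s) = ∑ t, A s t • X t := aeval_X _ s

lemma substAlg_mul {ι : Type*} [Fintype ι] [DecidableEq ι] {k : Type*} [CommSemiring k]
    (A B : Matrix ι ι k) : substAlg (A * B) = (substAlg B).comp (substAlg A) := by
  apply algHom_ext
  intro s
  rw [AlgHom.comp_apply, substAlg_X, substAlg_X, map_sum]
  simp_rw [map_smul, substAlg_X, Finset.smul_sum, smul_smul, Matrix.mul_apply,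
    Finset.sum_smul]
  exact Finset.sum_comm

lemma substAlg_one {ι : Type*} [Fintype ι] [DecidableEq ι] {k : Type*} [CommSemiring k] :
    substAlg (1 : Matrix ι ι k) = AlgHom.id k (MvPolynomial ι k) := by
  apply algHom_ext
  intro s
  simp [substAlg_X, Matrix.one_apply, ite_smul]

/-- Complexification of a rational matrix. -/
noncomputable def matC (A : Matrix (Fin 3) (Fin 3) ℚ) : Matrix (Fin 3) (Fin 3) ℂ :=
  A.map fun a : ℚ => (a : ℂ)

lemma matC_mul (A B : Matrix (Fin 3) (Fin 3) ℚ) : matC (A * B) = matC A * matC B := by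
  exact Matrix.map_mul (f := Rat.castHom ℂ)

lemma matC_one : matC 1 = 1 :=
  Matrix.map_one _ (by norm_num) (by norm_num)

noncomputable def tauC : Matrix (Fin 3) (Fin 3) ℂ := !![1, 0, 0; 0, -1, 0; 0, 0, 1]
noncomputable def sigmaC : Matrix (Fin 3) (Fin 3) ℂ :=
  !![1/2, 1/2, 1; 1/2, 1/2, -1; 1/2, -1/2, 0]
noncomputable def MC : Matrix (Fin 3) (Fin 3) ℂ := !![1, 0, -1; 0, 1, 1; 0, -1, 1]
noncomputable def NC : Matrix (Fin 3) (Fin 3) ℂ :=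
  !![1, 1/2, 1/2; 0, 1/2, -1/2; 0, 1/2, 1/2]
noncomputable def P01C : Matrix (Fin 3) (Fin 3) ℂ := !![0, 1, 0; 1, 0, 0; 0, 0, 1]
noncomputable def P12C : Matrix (Fin 3) (Fin 3) ℂ := !![1, 0, 0; 0, 0, 1; 0, 1, 0]

lemma tauQ_map : matC tauQ = tauC := by
  ext i j
  fin_cases i <;> fin_cases j <;> norm_num [matC, Matrix.map_apply, tauQ, tauC, Matrix.vecHead, Matrix.vecTail]

lemma sigmaQ_map : matC sigmaQ = sigmaC := by
  ext i j
  fin_cases i <;> fin_cases j <;> norm_num [matC, Matrix.map_apply, sigmaQ, sigmaC, Matrix.vecHead, Matrix.vecTail]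

lemma NC_MC : NC * MC = 1 := by
  ext i j
  fin_cases i <;> fin_cases j <;>
    norm_num [NC, MC, Matrix.mul_apply, Fin.sum_univ_three, Matrix.one_apply, Matrix.cons_val_two, Matrix.vecHead, Matrix.vecTail, Fin.ext_iff]

lemma NC_P12 : NC * P12C = tauC * NC := by
  ext i j
  fin_cases i <;> fin_cases j <;>
    norm_num [NC, P12C, tauC, Matrix.mul_apply, Fin.sum_univ_three, Matrix.cons_val_two, Matrix.vecHead, Matrix.vecTail]

lemma NC_P01 : NC * P01C = sigmaC * NC := by
  ext i j
  fin_cases i <;> fin_cases j <;>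
    norm_num [NC, P01C, sigmaC, Matrix.mul_apply, Fin.sum_univ_three, Matrix.cons_val_two, Matrix.vecHead, Matrix.vecTail]

lemma hC2 : (2 : MvPolynomial (Fin 3) ℂ) * C (1/2 : ℂ) = 1 := by
  rw [show (2 : MvPolynomial (Fin 3) ℂ) = C (2 : ℂ) from (map_ofNat _ 2).symm, ← C_mul]
  norm_num [Matrix.vecHead, Matrix.vecTail]

lemma tau_fix_f1 : substAlg tauC f1 = f1 := by
  simp only [substAlg, f1, tauC, Fin.sum_univ_three, smul_eq_C_mul, map_add, aeval_X,
    Matrix.cons_val_zero, Matrix.cons_val_one, Matrix.head_cons, Matrix.cons_val_two,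
    Matrix.tail_cons, Matrix.head_fin_const]
  norm_num [Matrix.cons_val_two, Matrix.vecHead, Matrix.vecTail]

lemma tau_fix_f2 : substAlg tauC f2 = f2 := by
  simp only [substAlg, f2, tauC, Fin.sum_univ_three, smul_eq_C_mul, map_add, map_mul, map_pow,
    map_ofNat, aeval_X]
  norm_num [Matrix.cons_val_two, Matrix.vecHead, Matrix.vecTail]

lemma tau_fix_f3 : substAlg tauC f3 = f3 := by
  simp only [substAlg, f3, tauC, Fin.sum_univ_three, smul_eq_C_mul, map_add, map_mul, map_pow,
    map_ofNat, aeval_X]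
  norm_num [Matrix.cons_val_two, Matrix.vecHead, Matrix.vecTail]

lemma sigma_fix_f1 : substAlg sigmaC f1 = f1 := by
  simp only [substAlg, f1, sigmaC, Fin.sum_univ_three, smul_eq_C_mul, map_add, aeval_X]
  norm_num [Matrix.cons_val_two, Matrix.vecHead, Matrix.vecTail]
  linear_combination (X 0 : MvPolynomial (Fin 3) ℂ) * hC2

lemma sigma_fix_f2 : substAlg sigmaC f2 = f2 := by
  simp only [substAlg, f2, sigmaC, Fin.sum_univ_three, smul_eq_C_mul, map_add, map_mul, map_pow,
    map_ofNat, aeval_X]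
  norm_num [Matrix.cons_val_two, Matrix.vecHead, Matrix.vecTail]
  linear_combination ((2 * C (1/2 : ℂ) * (X 0 ^ 2 + X 1 ^ 2) + X 0 ^ 2 + X 1 ^ 2 :
    MvPolynomial (Fin 3) ℂ)) * hC2

lemma sigma_fix_f3 : substAlg sigmaC f3 = f3 := by
  simp only [substAlg, f3, sigmaC, Fin.sum_univ_three, smul_eq_C_mul, map_add, map_mul, map_pow,
    map_ofNat, aeval_X]
  norm_num [Matrix.cons_val_two, Matrix.vecHead, Matrix.vecTail]
  linear_combination ((4 * C (1/2 : ℂ)^2 * X 0 ^ 3 + 6 * C (1/2 : ℂ) * X 1 ^ 2 * X 2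
    + 2 * C (1/2 : ℂ) * X 0 ^ 3 + 3 * X 0 * X 2 ^ 2 + 3 * X 1 ^ 2 * X 2 + X 0 ^ 3 :
    MvPolynomial (Fin 3) ℂ)) * hC2

/-! ### Elementary symmetric polynomials on three variables -/

lemma esymm3_1 : esymm (Fin 3) ℂ 1 = X 0 + X 1 + X 2 := by
  rw [esymm, show Finset.powersetCard 1 (Finset.univ : Finset (Fin 3)) =
    {{0}, {1}, {2}} from by decide]
  rw [Finset.sum_insert (by decide), Finset.sum_insert (by decide), Finset.sum_singleton]
  simp [add_assoc]

lemma esymm3_2 : esymm (Fin 3) ℂ 2 = X 0 * X 1 + X 0 * X 2 + X 1 * X 2 := by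
  rw [esymm, show Finset.powersetCard 2 (Finset.univ : Finset (Fin 3)) =
    {{0, 1}, {0, 2}, {1, 2}} from by decide]
  rw [Finset.sum_insert (by decide), Finset.sum_insert (by decide), Finset.sum_singleton,
    Finset.prod_insert (by decide), Finset.prod_insert (by decide),
    Finset.prod_insert (by decide), Finset.prod_singleton, Finset.prod_singleton]
  ring

lemma esymm3_3 : esymm (Fin 3) ℂ 3 = X 0 * X 1 * X 2 := by
  rw [esymm, show Finset.powersetCard 3 (Finset.univ : Finset (Fin 3)) =
    {{0, 1, 2}} from by decide]
  rw [Finset.sum_singleton, Finset.prod_insert (by decide), Finset.prod_insert (by decide),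
    Finset.prod_singleton, mul_assoc]

/-! ### Permutations of three elements -/

lemma perm3_cases (π : Equiv.Perm (Fin 3)) :
    π = 1 ∨ π = Equiv.swap 0 1 ∨ π = Equiv.swap 1 2 ∨
    π = Equiv.swap 0 1 * Equiv.swap 1 2 ∨ π = Equiv.swap 1 2 * Equiv.swap 0 1 ∨
    π = Equiv.swap 0 1 * (Equiv.swap 1 2 * Equiv.swap 0 1) := by
  revert π; decide

lemma substAlg_P01 : substAlg P01C = (rename ⇑(Equiv.swap (0 : Fin 3) 1) :
    MvPolynomial (Fin 3) ℂ →ₐ[ℂ] MvPolynomial (Fin 3) ℂ) := by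
  apply algHom_ext
  intro s
  rw [substAlg_X, rename_X]
  fin_cases s <;>
    norm_num [P01C, Fin.sum_univ_three, Matrix.cons_val_two, Matrix.vecHead, Matrix.vecTail, Equiv.swap_apply_def]
  all_goals decide

lemma substAlg_P12 : substAlg P12C = (rename ⇑(Equiv.swap (1 : Fin 3) 2) :
    MvPolynomial (Fin 3) ℂ →ₐ[ℂ] MvPolynomial (Fin 3) ℂ) := by
  apply algHom_ext
  intro s
  rw [substAlg_X, rename_X]
  fin_cases s <;>
    norm_num [P12C, Fin.sum_univ_three, Matrix.cons_val_two, Matrix.vecHead, Matrix.vecTail, Equiv.swap_apply_def]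
  all_goals decide

/-! ### Images of the elementary symmetric polynomials under `substAlg MC` -/

lemma MC_esymm1 : substAlg MC (esymm (Fin 3) ℂ 1) = f1 := by
  rw [esymm3_1]
  simp only [substAlg, f1, MC, Fin.sum_univ_three, smul_eq_C_mul, map_add, map_mul, aeval_X]
  norm_num [Matrix.cons_val_two, Matrix.vecHead, Matrix.vecTail]
  ring

lemma MC_esymm2 : substAlg MC (esymm (Fin 3) ℂ 2) = f1 * f1 - f2 := by
  rw [esymm3_2]
  simp only [substAlg, f1, f2, MC, Fin.sum_univ_three, smul_eq_C_mul, map_add, map_mul, map_pow,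
    map_ofNat, aeval_X]
  norm_num [Matrix.cons_val_two, Matrix.vecHead, Matrix.vecTail]
  ring

lemma MC_esymm3 :
    (3 : MvPolynomial (Fin 3) ℂ) * substAlg MC (esymm (Fin 3) ℂ 3) =
      f1 ^ 3 + 2 * f3 - 3 * (f1 * f2) := by
  rw [esymm3_3]
  simp only [substAlg, f1, f2, f3, MC, Fin.sum_univ_three, smul_eq_C_mul, map_add, map_mul,
    map_pow, map_ofNat, aeval_X]
  norm_num [Matrix.cons_val_two, Matrix.vecHead, Matrix.vecTail]
  ring

lemma tau_sq : tauQ * tauQ = 1 := by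
  ext i j
  fin_cases i <;> fin_cases j <;>
    norm_num [tauQ, Matrix.mul_apply, Fin.sum_univ_three, Matrix.one_apply,
      Matrix.cons_val_two, Matrix.vecHead, Matrix.vecTail, Fin.ext_iff]

lemma sigma_sq : sigmaQ * sigmaQ = 1 := by
  ext i j
  fin_cases i <;> fin_cases j <;>
    norm_num [sigmaQ, Matrix.mul_apply, Fin.sum_univ_three, Matrix.one_apply,
      Matrix.smul_apply, Matrix.cons_val_two, Matrix.vecHead, Matrix.vecTail, Fin.ext_iff]

lemma key_fixed (f : MvPolynomial (Fin 3) ℂ) (hτ : substAlg tauC f = f)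
    (hσ : substAlg sigmaC f = f) : ∀ u ∈ grpG, substAlg (matC ↑u) f = f := by
  intro u hu
  induction hu using Subgroup.closure_induction with
  | mem x hx =>
      rcases hx with hx | hx
      · rw [hx, tauQ_map]; exact hτ
      · rw [hx, sigmaQ_map]; exact hσ
  | one => rw [Units.val_one, matC_one, substAlg_one, AlgHom.id_apply]
  | mul x y hx hy ihx ihy =>
      rw [Units.val_mul, matC_mul, substAlg_mul, AlgHom.comp_apply, ihx, ihy]
  | inv x hx ih =>
      have h1 : substAlg (matC ↑x⁻¹) (substAlg (matC ↑x) f) = f := by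
        rw [← AlgHom.comp_apply, ← substAlg_mul, ← matC_mul, ← Units.val_mul,
          mul_inv_cancel, Units.val_one, matC_one, substAlg_one, AlgHom.id_apply]
      calc substAlg (matC ↑x⁻¹) f = substAlg (matC ↑x⁻¹) (substAlg (matC ↑x) f) := by rw [ih]
        _ = f := h1

/-- The invariant ring `ℂ[x_0,x_1,x_2]^G` of the group generated by `τ` and `σ` equals the
`ℂ`-subalgebra generated by `f_1, f_2, f_3`. -/
theorem invariants_G_eq_adjoin :
    (⨅ u ∈ grpG,
      AlgHom.equalizer
        (substAlg (((u : (Matrix (Fin 3) (Fin 3) ℚ)ˣ) : Matrix (Fin 3) (Fin 3) ℚ).map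
          fun a : ℚ => (a : ℂ)))
        (AlgHom.id ℂ (MvPolynomial (Fin 3) ℂ))) =
      Algebra.adjoin ℂ {f1, f2, f3} := by
  set A := Algebra.adjoin ℂ ({f1, f2, f3} : Set (MvPolynomial (Fin 3) ℂ)) with hA
  have hf1 : f1 ∈ A := Algebra.subset_adjoin (by simp)
  have hf2 : f2 ∈ A := Algebra.subset_adjoin (by simp)
  have hf3 : f3 ∈ A := Algebra.subset_adjoin (by simp)
  refine le_antisymm ?_ ?_
  · -- invariants ≤ adjoin
    set uτ : (Matrix (Fin 3) (Fin 3) ℚ)ˣ := ⟨tauQ, tauQ, tau_sq, tau_sq⟩ with huτ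
    set uσ : (Matrix (Fin 3) (Fin 3) ℚ)ˣ := ⟨sigmaQ, sigmaQ, sigma_sq, sigma_sq⟩ with huσ
    have hτu : uτ ∈ grpG := Subgroup.subset_closure (Or.inl rfl)
    have hσu : uσ ∈ grpG := Subgroup.subset_closure (Or.inr rfl)
    intro p hp
    have hpτ : substAlg tauC p = p := by
      have h := SetLike.le_def.mp (iInf₂_le uτ hτu) hp
      rw [AlgHom.mem_equalizer] at h
      rw [← tauQ_map]
      exact h.trans (AlgHom.id_apply _)
    have hpσ : substAlg sigmaC p = p := by
      have h := SetLike.le_def.mp (iInf₂_le uσ hσu) hp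
      rw [AlgHom.mem_equalizer] at h
      rw [← sigmaQ_map]
      exact h.trans (AlgHom.id_apply _)
    set q := substAlg NC p with hq
    have hrecover : substAlg MC q = p := by
      rw [hq, ← AlgHom.comp_apply, ← substAlg_mul, NC_MC, substAlg_one, AlgHom.id_apply]
    have hq12 : rename ⇑(Equiv.swap (1 : Fin 3) 2) q = q := by
      rw [← substAlg_P12, hq, ← AlgHom.comp_apply, ← substAlg_mul, NC_P12, substAlg_mul,
        AlgHom.comp_apply, hpτ]
    have hq01 : rename ⇑(Equiv.swap (0 : Fin 3) 1) q = q := by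
      rw [← substAlg_P01, hq, ← AlgHom.comp_apply, ← substAlg_mul, NC_P01, substAlg_mul,
        AlgHom.comp_apply, hpσ]
    have hsym : q.IsSymmetric := by
      intro π
      rcases perm3_cases π with h | h | h | h | h | h <;> subst h
      · simp
      · exact hq01
      · exact hq12
      · rw [Equiv.Perm.coe_mul, ← rename_rename, hq12, hq01]
      · rw [Equiv.Perm.coe_mul, ← rename_rename, hq01, hq12]
      · rw [Equiv.Perm.coe_mul, Equiv.Perm.coe_mul, ← rename_rename, ← rename_rename,
          hq01, hq12, hq01]
    obtain ⟨p', hp'⟩ := esymmAlgHom_fin_surjective ℂ (le_refl 3)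
      (⟨q, (mem_symmetricSubalgebra q).2 hsym⟩ : symmetricSubalgebra (Fin 3) ℂ)
    have hqval : q = aeval (fun i : Fin 3 => esymm (Fin 3) ℂ (i + 1)) p' := by
      have h := congrArg Subtype.val hp'
      rw [esymmAlgHom_apply] at h
      exact h.symm
    have hp_eq : p = aeval (fun i : Fin 3 => substAlg MC (esymm (Fin 3) ℂ (i + 1))) p' := by
      conv_lhs => rw [← hrecover, hqval]
      rw [show (fun i : Fin 3 => substAlg MC (esymm (Fin 3) ℂ (i + 1)))
        = fun i : Fin 3 => substAlg MC ((fun j : Fin 3 => esymm (Fin 3) ℂ (j + 1)) i) from rfl,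
        ← comp_aeval, AlgHom.comp_apply]
    have hmem : p ∈ Algebra.adjoin ℂ
        (Set.range fun i : Fin 3 => substAlg MC (esymm (Fin 3) ℂ (i + 1))) := by
      rw [Algebra.adjoin_range_eq_range_aeval]
      exact ⟨p', hp_eq.symm⟩
    refine Algebra.adjoin_le ?_ hmem
    rintro g ⟨i, rfl⟩
    fin_cases i
    · show substAlg MC (esymm (Fin 3) ℂ ((0 : ℕ) + 1)) ∈ A
      rw [show (0 : ℕ) + 1 = 1 from rfl, MC_esymm1]
      exact hf1
    · show substAlg MC (esymm (Fin 3) ℂ ((1 : ℕ) + 1)) ∈ A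
      rw [show (1 : ℕ) + 1 = 2 from rfl, MC_esymm2]
      exact sub_mem (mul_mem hf1 hf1) hf2
    · show substAlg MC (esymm (Fin 3) ℂ ((2 : ℕ) + 1)) ∈ A
      rw [show (2 : ℕ) + 1 = 3 from rfl]
      have hx : substAlg MC (esymm (Fin 3) ℂ 3)
          = ((3 : ℂ)⁻¹) • (f1 ^ 3 + 2 * f3 - 3 * (f1 * f2)) := by
        rw [← MC_esymm3, show (3 : MvPolynomial (Fin 3) ℂ) = C (3 : ℂ) from (map_ofNat _ 3).symm,
          smul_eq_C_mul, ← mul_assoc, ← C_mul]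
        norm_num
      rw [hx]
      refine Subalgebra.smul_mem A (sub_mem (add_mem (pow_mem hf1 3) ?_) ?_) _
      · rw [show (2 : MvPolynomial (Fin 3) ℂ) * f3 = f3 + f3 from by ring]
        exact add_mem hf3 hf3
      · rw [show (3 : MvPolynomial (Fin 3) ℂ) * (f1 * f2)
          = f1 * f2 + (f1 * f2 + f1 * f2) from by ring]
        exact add_mem (mul_mem hf1 hf2) (add_mem (mul_mem hf1 hf2) (mul_mem hf1 hf2))
  · -- adjoin ≤ invariants
    refine le_iInf fun u => le_iInf fun hu => ?_
    refine Algebra.adjoin_le ?_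
    intro g hg
    rw [SetLike.mem_coe, AlgHom.mem_equalizer, AlgHom.id_apply]
    rcases hg with rfl | rfl | rfl
    · exact key_fixed f1 tau_fix_f1 sigma_fix_f1 u hu
    · exact key_fixed f2 tau_fix_f2 sigma_fix_f2 u hu
    · exact key_fixed f3 tau_fix_f3 sigma_fix_f3 u hu
end

section
/- Let τ := diag(1,−1,1) and σ := (1/2)·[[1,1,2],[1,1,−2],[1,−1,0]], and let K be the subgroup of GL_3(ℚ) generated by the product τ·σ, acting on ℂ[x_0,x_1,x_2] by linear substitution of variables. Then K has order 3, and the invariant ring ℂ[x_0,x_1,x_2]^K equals the ℂ-subalgebra generated by f_1 := x_0 + x_2, f_2 := x_0² + x_1² + 2x_2², f_3 := x_0³ + 3x_0x_2² + 3x_1²x_2 + x_2³, and h := x_0²x_1 − 4x_0x_1x_2 − x_1³ + 4x_1x_2². -/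
open MvPolynomial

/-- The subgroup `K ≤ GL_3(ℚ)` generated by the product `τ·σ`. -/
def grpK : Subgroup (Matrix (Fin 3) (Fin 3) ℚ)ˣ :=
  Subgroup.closure
    {u : (Matrix (Fin 3) (Fin 3) ℚ)ˣ | (u : Matrix (Fin 3) (Fin 3) ℚ) = tauQ * sigmaQ}

noncomputable def hPoly : MvPolynomial (Fin 3) ℂ :=
  X 0 ^ 2 * X 1 - 4 * X 0 * X 1 * X 2 - X 1 ^ 3 + 4 * X 1 * X 2 ^ 2

/-! ### Auxiliary material -/

lemma substAlg_comp {ι : Type*} [Fintype ι] {k : Type*} [CommSemiring k]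
    (A B : Matrix ι ι k) :
    (substAlg A).comp (substAlg B) = substAlg (B * A) := by
  apply MvPolynomial.algHom_ext
  intro s
  simp only [AlgHom.comp_apply, substAlg, aeval_X, map_sum, map_smul, Matrix.mul_apply,
    Finset.sum_smul, smul_smul, Finset.smul_sum]
  rw [Finset.sum_comm]

/-! ### The group part -/

def gQ : Matrix (Fin 3) (Fin 3) ℚ := !![1/2, 1/2, 1; -(1/2), -(1/2), 1; 1/2, -(1/2), 0]

lemma tau_mul_sigma : tauQ * sigmaQ = gQ := by
  ext i j
  fin_cases i <;> fin_cases j <;>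
    norm_num [tauQ, sigmaQ, gQ, Matrix.mul_apply, Fin.sum_univ_three, Matrix.cons_val_two,
      Matrix.vecHead, Matrix.vecTail]

lemma gQ_cube : gQ * (gQ * gQ) = 1 := by
  ext i j
  fin_cases i <;> fin_cases j <;>
    norm_num [gQ, Matrix.mul_apply, Fin.sum_univ_three, Matrix.one_fin_three, Matrix.cons_val_two,
      Matrix.vecHead, Matrix.vecTail]

noncomputable def gU : (Matrix (Fin 3) (Fin 3) ℚ)ˣ :=
  ⟨gQ, gQ * gQ, gQ_cube, by rw [mul_assoc]; exact gQ_cube⟩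

lemma gU_ne_one : gU ≠ 1 := by
  intro h
  have : gQ 0 0 = (1 : Matrix (Fin 3) (Fin 3) ℚ) 0 0 := by
    rw [show gQ = ((1 : (Matrix (Fin 3) (Fin 3) ℚ)ˣ) : Matrix (Fin 3) (Fin 3) ℚ) from
      h ▸ rfl]
    rfl
  norm_num [gQ, Matrix.one_apply] at this

lemma genset_eq :
    {u : (Matrix (Fin 3) (Fin 3) ℚ)ˣ | (u : Matrix (Fin 3) (Fin 3) ℚ) = tauQ * sigmaQ}
      = {gU} := by
  ext u
  simp only [Set.mem_setOf_eq, Set.mem_singleton_iff, tau_mul_sigma]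
  constructor
  · intro h; exact Units.ext h
  · intro h; rw [h]; rfl

lemma grpK_eq : grpK = Subgroup.zpowers gU := by
  rw [grpK, genset_eq, Subgroup.zpowers_eq_closure]

lemma orderOf_gU : orderOf gU = 3 := by
  apply orderOf_eq_prime
  · have h : gQ ^ 3 = 1 := by rw [pow_succ, pow_two, mul_assoc]; exact gQ_cube
    exact Units.ext (by rw [Units.val_pow_eq_pow_val]; exact h)
  · exact gU_ne_one

lemma card_grpK : Nat.card grpK = 3 := by
  rw [grpK_eq, Nat.card_zpowers, orderOf_gU]

/-! ### The cube root of unity and the complex matrices -/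

noncomputable def ww : ℂ := (-1 + Real.sqrt 3 * Complex.I) / 2

lemma hww : ww ^ 2 + ww + 1 = 0 := by
  have h3 : ((Real.sqrt 3 : ℂ)) ^ 2 = 3 := by
    rw [← Complex.ofReal_pow, Real.sq_sqrt (by norm_num : (3:ℝ) ≥ 0)]
    norm_num
  unfold ww
  have hI : Complex.I ^ 2 = -1 := Complex.I_sq
  linear_combination (Complex.I ^ 2 / 4) * h3 + (3 / 4 : ℂ) * hI

noncomputable def gC : Matrix (Fin 3) (Fin 3) ℂ :=
  !![1/2, 1/2, 1; -(1/2), -(1/2), 1; 1/2, -(1/2), 0]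

noncomputable def Pm : Matrix (Fin 3) (Fin 3) ℂ :=
  !![1, 0, 1; 1, -(2*ww+1), -2; 1, 2*ww+1, -2]
noncomputable def Qm : Matrix (Fin 3) (Fin 3) ℂ :=
  !![2/3, 1/6, 1/6; 0, (2*ww+1)/6, -((2*ww+1)/6); 1/3, -(1/6), -(1/6)]
noncomputable def Dm : Matrix (Fin 3) (Fin 3) ℂ :=
  !![1, 0, 0; 0, ww, 0; 0, 0, ww^2]

lemma hQP : Qm * Pm = 1 := by
  ext i j
  fin_cases i <;> fin_cases j <;>
    simp [Qm, Pm, Matrix.mul_apply, Fin.sum_univ_three, Matrix.one_fin_three,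
      Matrix.cons_val', Matrix.cons_val_zero, Matrix.cons_val_one, Matrix.head_cons,
      Matrix.empty_val', Matrix.cons_val_fin_one, Matrix.head_fin_const,
      Matrix.vecHead, Matrix.vecTail] <;>
    first
      | ring1
      | linear_combination (-4/3 : ℂ) * hww

lemma hQD : Qm * Dm = gC * Qm := by
  ext i j
  fin_cases i <;> fin_cases j <;>
    simp [Qm, Dm, gC, Matrix.mul_apply, Fin.sum_univ_three,
      Matrix.cons_val', Matrix.cons_val_zero, Matrix.cons_val_one, Matrix.head_cons,
      Matrix.empty_val', Matrix.cons_val_fin_one, Matrix.head_fin_const,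
      Matrix.vecHead, Matrix.vecTail] <;>
    first
      | ring1
      | linear_combination (1/6 : ℂ) * hww
      | linear_combination (1/3 : ℂ) * hww
      | linear_combination (-1/6 : ℂ) * hww
      | linear_combination (1/6 - ww/3 : ℂ) * hww

lemma map_gQ : gQ.map (fun a : ℚ => (a : ℂ)) = gC := by
  ext i j
  fin_cases i <;> fin_cases j <;>
    norm_num [gQ, gC, Matrix.map_apply]

/-! ### Invariants of the diagonal action -/

lemma mon_eq (m : Fin 3 →₀ ℕ) (c : ℂ) :
    (monomial m c : MvPolynomial (Fin 3) ℂ) =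
      C c * (X 0 ^ m 0 * (X 1 ^ m 1 * X 2 ^ m 2)) := by
  rw [monomial_eq]
  congr 1
  rw [Finsupp.prod_fintype _ _ (fun i => pow_zero _), Fin.prod_univ_three, mul_assoc]

lemma substAlg_Dm_monomial (m : Fin 3 →₀ ℕ) (c : ℂ) :
    substAlg Dm (monomial m c) = ww ^ (m 1 + 2 * m 2) • monomial m c := by
  have h0 : substAlg Dm (X 0 : MvPolynomial (Fin 3) ℂ) = X 0 := by
    simp [substAlg, Dm, Fin.sum_univ_three]
  have h1 : substAlg Dm (X 1 : MvPolynomial (Fin 3) ℂ) = ww • X 1 := by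
    simp [substAlg, Dm, Fin.sum_univ_three]
  have h2 : substAlg Dm (X 2 : MvPolynomial (Fin 3) ℂ) = (ww^2) • X 2 := by
    simp [substAlg, Dm, Fin.sum_univ_three, Matrix.vecHead, Matrix.vecTail]
  have hc : substAlg Dm (C c : MvPolynomial (Fin 3) ℂ) = C c := by
    simp [substAlg, aeval_C, algebraMap_eq]
  rw [mon_eq]
  simp only [map_mul, map_pow]
  rw [h0, h1, h2, hc, smul_pow, smul_pow, ← pow_mul]
  simp only [smul_eq_C_mul]
  rw [pow_add, C_mul]
  ring

lemma coeff_substAlg_Dm (q : MvPolynomial (Fin 3) ℂ) (m : Fin 3 →₀ ℕ) :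
    coeff m (substAlg Dm q) = ww ^ (m 1 + 2 * m 2) * coeff m q := by
  induction q using MvPolynomial.induction_on' with
  | monomial m' c =>
    rw [substAlg_Dm_monomial, coeff_smul, coeff_monomial]
    by_cases h : m' = m
    · subst h; simp [smul_eq_mul]
    · simp [h]
  | add p q hp hq =>
    rw [map_add, coeff_add, coeff_add, hp, hq, mul_add]

lemma ww_pow_eq_one {k : ℕ} (h : ww ^ k = 1) : k % 3 = 0 := by
  have hcube : ww ^ 3 = 1 := by linear_combination (ww - 1) * hww
  have hk : ww ^ (k % 3) = 1 := by
    conv at h => rw [← Nat.div_add_mod k 3, pow_add, pow_mul, hcube, one_pow, one_mul]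
    exact h
  have hlt : k % 3 < 3 := Nat.mod_lt _ (by norm_num)
  interval_cases hk3 : k % 3
  · rfl
  · exfalso
    rw [pow_one] at hk
    have h2 := hww
    rw [hk] at h2
    norm_num at h2
  · exfalso
    have h2 := hww
    rw [hk] at h2
    have hw2 : ww = -2 := by linear_combination h2
    rw [hw2] at hk
    norm_num at hk

lemma aux_mem (A : Subalgebra ℂ (MvPolynomial (Fin 3) ℂ))
    (h12 : X 1 * X 2 ∈ A) (h1 : (X 1 : MvPolynomial (Fin 3) ℂ) ^ 3 ∈ A)
    (h2 : (X 2 : MvPolynomial (Fin 3) ℂ) ^ 3 ∈ A) :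
    ∀ n b c, b + c ≤ n → (b + 2 * c) % 3 = 0 →
      (X 1 : MvPolynomial (Fin 3) ℂ) ^ b * X 2 ^ c ∈ A := by
  intro n
  induction n with
  | zero =>
    intro b c hbc _
    have hb : b = 0 := by omega
    have hc : c = 0 := by omega
    subst hb; subst hc
    simpa using A.one_mem
  | succ n ih =>
    intro b c hbc hmod
    by_cases hb3 : 3 ≤ b
    · have : (X 1 : MvPolynomial (Fin 3) ℂ) ^ b * X 2 ^ c
          = X 1 ^ 3 * (X 1 ^ (b - 3) * X 2 ^ c) := by
        rw [← mul_assoc, ← pow_add]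
        congr 2
        omega
      rw [this]
      exact A.mul_mem h1 (ih (b - 3) c (by omega) (by omega))
    · by_cases hc3 : 3 ≤ c
      · have : (X 1 : MvPolynomial (Fin 3) ℂ) ^ b * X 2 ^ c
            = X 2 ^ 3 * (X 1 ^ b * X 2 ^ (c - 3)) := by
          rw [← mul_assoc, mul_comm ((X 2 : MvPolynomial (Fin 3) ℂ) ^ 3), mul_assoc,
            ← pow_add]
          congr 2
          omega
        rw [this]
        exact A.mul_mem h2 (ih b (c - 3) (by omega) (by omega))
      · push_neg at hb3 hc3
        interval_cases b <;> interval_cases c <;>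
          first
            | omega
            | simpa using A.one_mem
            | simpa using h12
            | · rw [show (X 1 : MvPolynomial (Fin 3) ℂ) ^ 2 * X 2 ^ 2 = (X 1 * X 2) ^ 2
                  by ring]
                exact A.pow_mem h12 2

lemma invariant_Dm_mem (q : MvPolynomial (Fin 3) ℂ) (hq : substAlg Dm q = q) :
    q ∈ Algebra.adjoin ℂ
      ({X 0, X 1 * X 2, X 1 ^ 3, X 2 ^ 3} : Set (MvPolynomial (Fin 3) ℂ)) := by
  set A := Algebra.adjoin ℂ
      ({X 0, X 1 * X 2, X 1 ^ 3, X 2 ^ 3} : Set (MvPolynomial (Fin 3) ℂ)) with hA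
  have hX0 : (X 0 : MvPolynomial (Fin 3) ℂ) ∈ A := Algebra.subset_adjoin (by simp)
  have hX12 : (X 1 * X 2 : MvPolynomial (Fin 3) ℂ) ∈ A := Algebra.subset_adjoin (by simp)
  have hX13 : ((X 1 : MvPolynomial (Fin 3) ℂ) ^ 3) ∈ A := Algebra.subset_adjoin (by simp)
  have hX23 : ((X 2 : MvPolynomial (Fin 3) ℂ) ^ 3) ∈ A := Algebra.subset_adjoin (by simp)
  rw [q.as_sum]
  apply Subalgebra.sum_mem
  intro m hm
  have hc : coeff m q ≠ 0 := mem_support_iff.mp hm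
  have hcoeff := coeff_substAlg_Dm q m
  rw [hq] at hcoeff
  have hw : ww ^ (m 1 + 2 * m 2) = 1 := by
    have : ww ^ (m 1 + 2 * m 2) * coeff m q = 1 * coeff m q := by
      rw [one_mul, ← hcoeff]
    exact mul_right_cancel₀ hc this
  have hmod : (m 1 + 2 * m 2) % 3 = 0 := ww_pow_eq_one hw
  rw [mon_eq]
  have hCc : (C (coeff m q) : MvPolynomial (Fin 3) ℂ) ∈ A := by
    rw [← algebraMap_eq]; exact A.algebraMap_mem _
  exact A.mul_mem hCc (A.mul_mem (A.pow_mem hX0 _)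
    (aux_mem A hX12 hX13 hX23 (m 1 + m 2) (m 1) (m 2) le_rfl hmod))

/-! ### Invariance of the generators under `gC` -/

lemma hhalf : (2 : MvPolynomial (Fin 3) ℂ) * C ((1:ℂ)/2) = 1 := by
  rw [show (2 : MvPolynomial (Fin 3) ℂ) = C 2 from (map_ofNat C 2).symm, ← C_mul]
  norm_num

lemma hgc0 : substAlg gC (X 0 : MvPolynomial (Fin 3) ℂ)
    = C ((1:ℂ)/2) * X 0 + C ((1:ℂ)/2) * X 1 + X 2 := by
  simp [substAlg, gC, Fin.sum_univ_three, smul_eq_C_mul, Matrix.vecHead, Matrix.vecTail]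

lemma hgc1 : substAlg gC (X 1 : MvPolynomial (Fin 3) ℂ)
    = -(C ((1:ℂ)/2) * X 0) - C ((1:ℂ)/2) * X 1 + X 2 := by
  simp [substAlg, gC, Fin.sum_univ_three, smul_eq_C_mul, Matrix.vecHead, Matrix.vecTail]
  ring

lemma hgc2 : substAlg gC (X 2 : MvPolynomial (Fin 3) ℂ)
    = C ((1:ℂ)/2) * X 0 - C ((1:ℂ)/2) * X 1 := by
  simp [substAlg, gC, Fin.sum_univ_three, smul_eq_C_mul, Matrix.vecHead, Matrix.vecTail]
  ring

lemma inv_f1 : substAlg gC f1 = f1 := by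
  simp only [f1, map_add, hgc0, hgc2]
  linear_combination (X 0 : MvPolynomial (Fin 3) ℂ) * hhalf

lemma inv_f2 : substAlg gC f2 = f2 := by
  simp only [f2, map_add, map_mul, map_pow, map_ofNat, hgc0, hgc1, hgc2]
  linear_combination ((X 1 ^ 2 + X 0 ^ 2 : MvPolynomial (Fin 3) ℂ)
    + 2 * C ((1:ℂ)/2) * X 1 ^ 2 + 2 * C ((1:ℂ)/2) * X 0 ^ 2) * hhalf

lemma inv_f3 : substAlg gC f3 = f3 := by
  simp only [f3, map_add, map_mul, map_pow, map_ofNat, hgc0, hgc1, hgc2]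
  linear_combination ((3 * X 1 ^ 2 * X 2 + 3 * X 0 * X 2 ^ 2 + X 0 ^ 3
      : MvPolynomial (Fin 3) ℂ)
    + 6 * C ((1:ℂ)/2) * X 1 ^ 2 * X 2 + 2 * C ((1:ℂ)/2) * X 0 ^ 3
    + 4 * C ((1:ℂ)/2) ^ 2 * X 0 ^ 3) * hhalf

lemma inv_h : substAlg gC hPoly = hPoly := by
  simp only [hPoly, map_add, map_sub, map_mul, map_pow, map_ofNat, hgc0, hgc1, hgc2]
  linear_combination ((4 * X 1 * X 2 ^ 2 - X 1 ^ 3 - 4 * X 0 * X 1 * X 2 + X 0 ^ 2 * X 1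
      : MvPolynomial (Fin 3) ℂ)
    - 2 * C ((1:ℂ)/2) * X 1 ^ 3 - 8 * C ((1:ℂ)/2) * X 0 * X 1 * X 2
    + 2 * C ((1:ℂ)/2) * X 0 ^ 2 * X 1
    - 4 * C ((1:ℂ)/2) ^ 2 * X 1 ^ 3 + 4 * C ((1:ℂ)/2) ^ 2 * X 0 ^ 2 * X 1) * hhalf

/-! ### Images of the diagonal invariants under `Pm` -/

lemma hCw : (C ww : MvPolynomial (Fin 3) ℂ) ^ 2 + C ww + 1 = 0 := by
  rw [show ((C ww : MvPolynomial (Fin 3) ℂ) ^ 2 + C ww + 1) = C (ww ^ 2 + ww + 1) by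
    push_cast [C_add, C_pow, C_1]; ring]
  rw [hww, C_0]

lemma hpm0 : substAlg Pm (X 0 : MvPolynomial (Fin 3) ℂ) = X 0 + X 2 := by
  simp [substAlg, Pm, Fin.sum_univ_three, smul_eq_C_mul, Matrix.vecHead, Matrix.vecTail]

lemma hpm1 : substAlg Pm (X 1 : MvPolynomial (Fin 3) ℂ)
    = X 0 - (2 * C ww + 1) * X 1 - 2 * X 2 := by
  simp [substAlg, Pm, Fin.sum_univ_three, smul_eq_C_mul, Matrix.vecHead, Matrix.vecTail,
    map_neg, map_add, map_mul, map_ofNat, map_one]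
  ring

lemma hpm2 : substAlg Pm (X 2 : MvPolynomial (Fin 3) ℂ)
    = X 0 + (2 * C ww + 1) * X 1 - 2 * X 2 := by
  simp [substAlg, Pm, Fin.sum_univ_three, smul_eq_C_mul, Matrix.vecHead, Matrix.vecTail,
    map_neg, map_add, map_mul, map_ofNat, map_one]
  ring

lemma psi_X0 : substAlg Pm (X 0 : MvPolynomial (Fin 3) ℂ) = f1 := by
  rw [hpm0, f1]

lemma psi_X12 : substAlg Pm (X 1 * X 2 : MvPolynomial (Fin 3) ℂ)
    = 3 * f2 - 2 * f1 ^ 2 := by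
  rw [map_mul, hpm1, hpm2, f1, f2]
  linear_combination (-4 * (X 1 : MvPolynomial (Fin 3) ℂ) ^ 2) * hCw

lemma psi_X13 : substAlg Pm ((X 1 : MvPolynomial (Fin 3) ℂ) ^ 3)
    = f1 ^ 3 - 9 * (f1 * f2) + 9 * f3 - (3 * (2 * C ww + 1)) * hPoly := by
  rw [map_pow, hpm1, f1, f2, f3, hPoly]
  linear_combination (-24 * (X 1:MvPolynomial (Fin 3) ℂ) ^ 2 * X 2 - 4 * X 1 ^ 3
    + 12 * X 0 * X 1 ^ 2 - 8 * C ww * X 1 ^ 3) * hCw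

lemma psi_X23 : substAlg Pm ((X 2 : MvPolynomial (Fin 3) ℂ) ^ 3)
    = f1 ^ 3 - 9 * (f1 * f2) + 9 * f3 + (3 * (2 * C ww + 1)) * hPoly := by
  rw [map_pow, hpm2, f1, f2, f3, hPoly]
  linear_combination (-24 * (X 1:MvPolynomial (Fin 3) ℂ) ^ 2 * X 2 + 4 * X 1 ^ 3
    + 12 * X 0 * X 1 ^ 2 + 8 * C ww * X 1 ^ 3) * hCw

/-! ### Assembling the invariant ring computation -/

lemma numeral_constants_mem (A : Subalgebra ℂ (MvPolynomial (Fin 3) ℂ)) (z : ℂ) :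
    (C z : MvPolynomial (Fin 3) ℂ) ∈ A := by
  rw [← algebraMap_eq]; exact A.algebraMap_mem _

lemma adjoin_f_mem :
    let A := Algebra.adjoin ℂ ({f1, f2, f3, hPoly} : Set (MvPolynomial (Fin 3) ℂ))
    f1 ∈ A ∧ f2 ∈ A ∧ f3 ∈ A ∧ hPoly ∈ A := by
  refine ⟨?_, ?_, ?_, ?_⟩ <;> exact Algebra.subset_adjoin (by simp)

lemma equalizer_gC_le :
    AlgHom.equalizer (substAlg gC) (AlgHom.id ℂ (MvPolynomial (Fin 3) ℂ))
      ≤ Algebra.adjoin ℂ ({f1, f2, f3, hPoly} : Set (MvPolynomial (Fin 3) ℂ)) := by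
  intro p hp
  have hp' : substAlg gC p = p := hp
  set A := Algebra.adjoin ℂ ({f1, f2, f3, hPoly} : Set (MvPolynomial (Fin 3) ℂ)) with hA
  have hf1 : f1 ∈ A := Algebra.subset_adjoin (by simp)
  have hf2 : f2 ∈ A := Algebra.subset_adjoin (by simp)
  have hf3 : f3 ∈ A := Algebra.subset_adjoin (by simp)
  have hfh : hPoly ∈ A := Algebra.subset_adjoin (by simp)
  -- transport to the diagonal picture
  set q : MvPolynomial (Fin 3) ℂ := substAlg Qm p with hqdef
  have hPmq : substAlg Pm q = p := by
    rw [hqdef, ← AlgHom.comp_apply, substAlg_comp, hQP, substAlg_one]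
    rfl
  have hDq : substAlg Dm q = q := by
    rw [hqdef, ← AlgHom.comp_apply, substAlg_comp, hQD, ← substAlg_comp,
      AlgHom.comp_apply, hp']
  have hqmem := invariant_Dm_mem q hDq
  rw [← hPmq]
  -- now push the membership through `substAlg Pm`
  have hsub : ∀ r ∈ Algebra.adjoin ℂ
      ({X 0, X 1 * X 2, X 1 ^ 3, X 2 ^ 3} : Set (MvPolynomial (Fin 3) ℂ)),
      substAlg Pm r ∈ A := by
    intro r hr
    have : substAlg Pm r ∈ (Algebra.adjoin ℂ
        ({X 0, X 1 * X 2, X 1 ^ 3, X 2 ^ 3} : Set (MvPolynomial (Fin 3) ℂ))).map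
        (substAlg Pm) := ⟨r, hr, rfl⟩
    rw [AlgHom.map_adjoin] at this
    refine Algebra.adjoin_le ?_ this
    rintro x ⟨y, hy, rfl⟩
    rcases hy with rfl | rfl | rfl | rfl
    · rw [psi_X0]; exact hf1
    · rw [psi_X12]
      exact A.sub_mem
        (A.mul_mem (by simpa using numeral_constants_mem A 3) hf2)
        (A.mul_mem (by simpa using numeral_constants_mem A 2) (A.pow_mem hf1 2))
    · rw [psi_X13]
      refine A.sub_mem (A.add_mem (A.sub_mem (A.pow_mem hf1 3)
        (A.mul_mem (by simpa using numeral_constants_mem A 9) (A.mul_mem hf1 hf2)))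
        (A.mul_mem (by simpa using numeral_constants_mem A 9) hf3)) ?_
      exact A.mul_mem (A.mul_mem (by simpa using numeral_constants_mem A 3)
        (A.add_mem (A.mul_mem (by simpa using numeral_constants_mem A 2)
          (numeral_constants_mem A ww)) A.one_mem)) hfh
    · rw [psi_X23]
      refine A.add_mem (A.add_mem (A.sub_mem (A.pow_mem hf1 3)
        (A.mul_mem (by simpa using numeral_constants_mem A 9) (A.mul_mem hf1 hf2)))
        (A.mul_mem (by simpa using numeral_constants_mem A 9) hf3)) ?_
      exact A.mul_mem (A.mul_mem (by simpa using numeral_constants_mem A 3)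
        (A.add_mem (A.mul_mem (by simpa using numeral_constants_mem A 2)
          (numeral_constants_mem A ww)) A.one_mem)) hfh
  exact hsub q hqmem

/-! ### The main theorem -/

/-- `K = ⟨τ·σ⟩` has order `3`, and the invariant ring `ℂ[x_0,x_1,x_2]^K` equals the
`ℂ`-subalgebra generated by `f_1, f_2, f_3, h`. -/
theorem card_K_and_invariants_K_eq_adjoin :
    Nat.card grpK = 3 ∧
    (⨅ u ∈ grpK,
      AlgHom.equalizer
        (substAlg (((u : (Matrix (Fin 3) (Fin 3) ℚ)ˣ) : Matrix (Fin 3) (Fin 3) ℚ).map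
          fun a : ℚ => (a : ℂ)))
        (AlgHom.id ℂ (MvPolynomial (Fin 3) ℂ))) =
      Algebra.adjoin ℂ {f1, f2, f3, hPoly} := by
  constructor
  · exact card_grpK
  · apply le_antisymm
    · -- infimum ≤ adjoin : use the generator gU
      have hgU : gU ∈ grpK := Subgroup.subset_closure (by
        show (gU : Matrix (Fin 3) (Fin 3) ℚ) = tauQ * sigmaQ
        rw [tau_mul_sigma]; rfl)
      refine le_trans (iInf₂_le gU hgU) ?_
      have : ((gU : (Matrix (Fin 3) (Fin 3) ℚ)ˣ) : Matrix (Fin 3) (Fin 3) ℚ).map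
          (fun a : ℚ => (a : ℂ)) = gC := by
        show gQ.map (fun a : ℚ => (a : ℂ)) = gC
        exact map_gQ
      rw [this]
      exact equalizer_gC_le
    · -- adjoin ≤ infimum
      refine le_iInf₂ ?_
      intro u hu
      have key : ∀ v : (Matrix (Fin 3) (Fin 3) ℚ)ˣ, v ∈ grpK →
          ∀ p ∈ Algebra.adjoin ℂ ({f1, f2, f3, hPoly} : Set (MvPolynomial (Fin 3) ℂ)),
          substAlg (((v : (Matrix (Fin 3) (Fin 3) ℚ)ˣ) : Matrix (Fin 3) (Fin 3) ℚ).map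
            fun a : ℚ => (a : ℂ)) p = p := by
        intro v hv
        induction hv using Subgroup.closure_induction with
        | mem x hx =>
          intro p hp
          have hx' : (x : Matrix (Fin 3) (Fin 3) ℚ).map (fun a : ℚ => (a : ℂ)) = gC := by
            rw [hx, tau_mul_sigma]; exact map_gQ
          rw [hx']
          have : p ∈ AlgHom.equalizer (substAlg gC)
              (AlgHom.id ℂ (MvPolynomial (Fin 3) ℂ)) := by
            refine Algebra.adjoin_le ?_ hp
            rintro y (rfl | rfl | rfl | rfl)
            · exact inv_f1
            · exact inv_f2
            · exact inv_f3
            · exact inv_h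
          exact this
        | one =>
          intro p hp
          have h1 : ((1 : (Matrix (Fin 3) (Fin 3) ℚ)ˣ) : Matrix (Fin 3) (Fin 3) ℚ).map
              (fun a : ℚ => (a : ℂ)) = 1 := by
            rw [Units.val_one]
            exact Matrix.map_one _ (by norm_num) (by norm_num)
          rw [h1, substAlg_one]
          rfl
        | mul x y hx hy hx' hy' =>
          intro p hp
          have hmap : ((x * y : (Matrix (Fin 3) (Fin 3) ℚ)ˣ) : Matrix (Fin 3) (Fin 3) ℚ).map
              (fun a : ℚ => (a : ℂ))
              = ((x : (Matrix (Fin 3) (Fin 3) ℚ)ˣ) : Matrix (Fin 3) (Fin 3) ℚ).map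
                  (fun a : ℚ => (a : ℂ))
                * ((y : (Matrix (Fin 3) (Fin 3) ℚ)ˣ) : Matrix (Fin 3) (Fin 3) ℚ).map
                  (fun a : ℚ => (a : ℂ)) := by
            rw [Units.val_mul]
            exact Matrix.map_mul (f := (Rat.castHom ℂ))
          rw [hmap, ← substAlg_comp, AlgHom.comp_apply, hx' p hp, hy' p hp]
        | inv x hx hx' =>
          intro p hp
          have hinv : substAlg (((x⁻¹ : (Matrix (Fin 3) (Fin 3) ℚ)ˣ) :
              Matrix (Fin 3) (Fin 3) ℚ).map (fun a : ℚ => (a : ℂ)))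
              (substAlg (((x : (Matrix (Fin 3) (Fin 3) ℚ)ˣ) :
                Matrix (Fin 3) (Fin 3) ℚ).map (fun a : ℚ => (a : ℂ))) p) = p := by
            have hcast : (fun a : ℚ => (a : ℂ)) = ⇑(Rat.castHom ℂ) := rfl
            rw [← AlgHom.comp_apply, substAlg_comp, hcast, ← Matrix.map_mul,
              ← Units.val_mul, mul_inv_cancel, Units.val_one,
              Matrix.map_one _ (by norm_num) (by norm_num), substAlg_one]
            rfl
          rw [hx' p hp] at hinv
          exact hinv
      intro p hp
      exact key u hu p hp
end
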